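/- (Mikhalkin) Let f be a polynomial in n variables with real coefficients, regarded as a complex polynomial, and let z ∈ (ℝ*)ⁿ ⊆ (ℂ*)ⁿ be a point with all coordinates real and nonzero such that f(z) = 0 and the vector g = (z₁·∂f/∂z₁(z), …, zₙ·∂f/∂zₙ(z)) is nonzero. Then z is a critical point of Log restricted to V_f; that is, the ℝ-linear map φ : T_z → ℝⁿ, φ(v) = (Re(v₁/z₁),…,Re(vₙ/zₙ)), restricted to the complex tangent space T_z = {v ∈ ℂⁿ : ∑_k (∂f/∂z_k)(z)·v_k = 0}, is not surjective onto ℝⁿ. -/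
import Mathlib


/-- (Mikhalkin) A real nonsingular point of a hypersurface defined over `ℝ` is a
critical point of `Log` restricted to the complex hypersurface `V_f`: the differential
of `Log` on the complex tangent space is not surjective onto `ℝⁿ`. -/
theorem real_point_is_critical_for_Log {n : ℕ} (f : MvPolynomial (Fin n) ℝ)
    (z : Fin n → ℝ) (hz : ∀ i, z i ≠ 0)
    (hfz : MvPolynomial.eval z f = 0)
    (hg : ∃ k, z k * MvPolynomial.eval z (MvPolynomial.pderiv k f) ≠ 0) :
    ¬ ∀ y : Fin n → ℝ, ∃ v : Fin n → ℂ,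
        (∑ k, MvPolynomial.eval (fun i => (z i : ℂ))
          (MvPolynomial.pderiv k (MvPolynomial.map (algebraMap ℝ ℂ) f)) * v k = 0) ∧
        ∀ k, (v k / (z k : ℂ)).re = y k := by
  -- notation: d k is the real derivative value
  set d : Fin n → ℝ := fun k => MvPolynomial.eval z (MvPolynomial.pderiv k f) with hd
  have key : ∀ k, MvPolynomial.eval (fun i => (z i : ℂ))
      (MvPolynomial.pderiv k (MvPolynomial.map (algebraMap ℝ ℂ) f)) = ((d k : ℝ) : ℂ) := by
    intro k
    rw [MvPolynomial.pderiv_map, MvPolynomial.eval_map]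
    simp [hd, MvPolynomial.eval₂_eq, MvPolynomial.eval_eq]
  intro h
  obtain ⟨v, hv1, hv2⟩ := h (fun k => z k * d k)
  -- rewrite the tangent condition
  have hv1' : ∑ k, ((d k : ℂ)) * v k = 0 := by
    rw [← hv1]; exact Finset.sum_congr rfl fun k _ => by rw [key]
  -- take real part
  have hre : ∑ k, d k * (v k).re = 0 := by
    have := congrArg Complex.re hv1'
    simpa [Complex.re_sum] using this
  -- express (v k).re via hv2
  have hvk : ∀ k, (v k).re = z k * (z k * d k) := by
    intro k
    have h2 := hv2 k
    have : (v k / (z k : ℂ)).re = (v k).re / z k := by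
      rw [Complex.div_ofReal_re]
    rw [this] at h2
    rw [div_eq_iff (hz k)] at h2
    rw [h2]; ring
  have : ∑ k, (z k * d k) ^ 2 = 0 := by
    rw [← hre]
    exact (Finset.sum_congr rfl fun k _ => by rw [hvk k]; ring).symm
  obtain ⟨k, hk⟩ := hg
  have hk2 : (z k * d k) ^ 2 = 0 := by
    have hnn : ∀ i ∈ Finset.univ, (0:ℝ) ≤ (z i * d i) ^ 2 := fun i _ => sq_nonneg _
    exact (Finset.sum_eq_zero_iff_of_nonneg hnn).mp this k (Finset.mem_univ k)
  exact hk ((pow_eq_zero_iff two_ne_zero).mp hk2)
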